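/- Let x : ℝ → ℍ be an integrable function taking values in the real span of {1, i} (i.e. the j- and k-components of x(t) vanish for every t), and define its quaternion Fourier transform X(ν) = ∫ℝ x(t)·exp(−j·2π·ν·t) dt, where exp(θ·j) = cos θ + (sin θ)·j. Then for every ν ∈ ℝ, X(−ν) = −i·X(ν)·i (the i-Hermitian symmetry of the QFT of a ℂᵢ-valued signal). -/

import Mathlib

open Quaternion MeasureTheory

noncomputable section

/-- The imaginary unit `i` of the quaternions. -/
def qi : ℍ[ℝ] := ⟨0, 1, 0, 0⟩

/-- The imaginary unit `j` of the quaternions. -/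
def qj : ℍ[ℝ] := ⟨0, 0, 1, 0⟩

/-- The embedding `ι : ℂ → ℍ` sending `a + b·√(−1)` to `a + b·j`. -/
def iotaC (z : ℂ) : ℍ[ℝ] := ⟨z.re, 0, z.im, 0⟩

/-- The identification `Φ : ℂ² → ℍ`, `Φ(z₁, z₂) = ι(z₁) + i·ι(z₂)`. -/
def PhiMap (z : Fin 2 → ℂ) : ℍ[ℝ] := iotaC (z 0) + qi * iotaC (z 1)

/-- A quaternion is a pure unit quaternion if its real part is `0` and its modulus is `1`. -/
def IsPureUnit (μ : ℍ[ℝ]) : Prop := μ.re = 0 ∧ ‖μ‖ = 1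

/-- The quaternion exponential. -/
def qexp (q : ℍ[ℝ]) : ℍ[ℝ] := NormedSpace.exp q

/-- The Euclidean inner product on `ℍ ≅ ℝ⁴`: `⟨p, q⟩` is the real part of `p·q̄`. -/
def qinner (p q : ℍ[ℝ]) : ℝ := (p * star q).re

lemma qi_re : qi.re = 0 := rfl
lemma qi_imI : qi.imI = 1 := rfl
lemma qi_imJ : qi.imJ = 0 := rfl
lemma qi_imK : qi.imK = 0 := rfl
lemma qj_re : qj.re = 0 := rfl
lemma qj_imI : qj.imI = 0 := rfl
lemma qj_imJ : qj.imJ = 1 := rfl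
lemma qj_imK : qj.imK = 0 := rfl

/-- Conjugation by `i` (with a sign), as a ring homomorphism. -/
def conjI : ℍ[ℝ] →+* ℍ[ℝ] where
  toFun q := -(qi * q * qi)
  map_one' := by simp [qi_re, qi_imI, qi_imJ, qi_imK, Quaternion.ext_iff]
  map_mul' p q := by ext <;> simp [qi_re, qi_imI, qi_imJ, qi_imK] <;> ring
  map_zero' := by simp
  map_add' p q := by ext <;> simp [qi_re, qi_imI, qi_imJ, qi_imK] <;> ring

lemma conjI_apply (q : ℍ[ℝ]) : conjI q = -(qi * q * qi) := rfl

lemma conjI_continuous : Continuous conjI := by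
  have : (conjI : ℍ[ℝ] → ℍ[ℝ]) = fun q => -(qi * q * qi) := rfl
  rw [this]
  fun_prop

lemma conjI_qexp (q : ℍ[ℝ]) : conjI (qexp q) = qexp (conjI q) :=
  by letI : NormedAlgebra ℚ ℍ[ℝ] := .restrictScalars ℚ ℝ ℍ[ℝ]; exact NormedSpace.map_exp conjI conjI_continuous q

lemma conjI_fix (q : ℍ[ℝ]) (h1 : q.imJ = 0) (h2 : q.imK = 0) : conjI q = q := by
  simp [conjI_apply, qi_re, qi_imI, qi_imJ, qi_imK, Quaternion.ext_iff, h1, h2, mul_comm]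

lemma conjI_j_smul (r : ℝ) : conjI (-(qj * (r : ℍ[ℝ]))) = qj * (r : ℍ[ℝ]) := by
  rw [conjI_apply]
  ext <;> simp [qi_re, qi_imI, qi_imJ, qi_imK, qj_re, qj_imI, qj_imJ, qj_imK] <;> ring

lemma norm_qexp_j (r : ℝ) : ‖qexp (-(qj * (r : ℍ[ℝ])))‖ = 1 := by
  rw [qexp, Quaternion.norm_exp]
  have : (-(qj * (r : ℍ[ℝ]))).re = 0 := by
    simp [qj_re, qj_imI, qj_imJ, qj_imK, Quaternion.ext_iff, re_coe, imI_coe]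
  rw [this, NormedSpace.exp_zero]
  simp

/-- i-Hermitian symmetry of the QFT of a `ℂᵢ`-valued signal: `X(−ν) = −i·X(ν)·i`. -/
theorem qft_i_hermitian_symmetry (x : ℝ → ℍ[ℝ]) (hx : Integrable x)
    (hval : ∀ t, (x t).imJ = 0 ∧ (x t).imK = 0)
    (X : ℝ → ℍ[ℝ])
    (hX : ∀ ν, X ν = ∫ t, x t * qexp (-(qj * ((2 * Real.pi * ν * t : ℝ) : ℍ[ℝ])))) :
    ∀ ν, X (-ν) = -(qi * X ν * qi) := by
  intro ν
  rw [hX, hX]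
  -- the integrand for ν
  set f : ℝ → ℍ[ℝ] := fun t => x t * qexp (-(qj * ((2 * Real.pi * ν * t : ℝ) : ℍ[ℝ]))) with hf
  -- integrability of f
  have hmeas : AEStronglyMeasurable f volume := by
    apply hx.aestronglyMeasurable.mul
    apply Continuous.aestronglyMeasurable
    unfold qexp
    letI : NormedAlgebra ℚ ℍ[ℝ] := .restrictScalars ℚ ℝ ℍ[ℝ]
    exact NormedSpace.exp_continuous.comp
      ((continuous_const.mul (Quaternion.continuous_coe.comp (by fun_prop))).neg)
  have hfint : Integrable f := by
    refine (hx.norm.mono' hmeas ?_)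
    filter_upwards with t
    rw [hf]
    simp only [norm_mul, norm_qexp_j, mul_one]
    exact le_refl _
  -- right side: pull conjugation inside the integral
  have key : -(qi * (∫ t, f t) * qi) = ∫ t, conjI (f t) := by
    have := (-(ContinuousLinearMap.mulLeftRight ℝ ℍ[ℝ] qi qi)).integral_comp_comm hfint
    simpa [conjI_apply] using this.symm
  rw [key]
  congr 1
  funext t
  rw [hf]
  simp only [map_mul]
  rw [conjI_fix (x t) (hval t).1 (hval t).2, conjI_qexp, conjI_j_smul]
  congr 2
  ext <;> simp [qj_re, qj_imI, qj_imJ, qj_imK] <;> ring
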